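/- arXiv:1905.04298 — 2 statements merged into one kernel-verified Lean document; each statement's English description precedes it below -/
import Mathlib

section
/- For each i with 1 ≤ i ≤ s−1, the ideal Σ_i·ℤ_ℓ[H₀] equals Σ_i·ℤ_ℓ[K_i], where K_i ≤ H₀ is the subgroup generated by {x̄_j : 1 ≤ j ≤ s−1, j ≠ i}; in particular Σ_i·ℤ_ℓ[H₀] is a free ℤ_ℓ-module of rank ℓ^{k(s−2)}. Moreover Σ_s·ℤ_ℓ[H₀] equals the set of elements a ∈ ℤ_ℓ[H₀] fixed under multiplication by x̄₁x̄₂⋯x̄_{s−1}, and it is also a free ℤ_ℓ-module of rank ℓ^{k(s−2)}. -/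
namespace GenFermatGA

/-- The group `H₀ = (ℤ/ℓᵏℤ)^{s-1}`, written multiplicatively. -/
abbrev H (ℓ k s : ℕ) : Type := Multiplicative (Fin (s - 1) → ZMod (ℓ ^ k))

/-- The group algebra `ℤ_ℓ[H₀]` over the `ℓ`-adic integers. -/
abbrev A (ℓ k s : ℕ) [Fact (Nat.Prime ℓ)] : Type := MonoidAlgebra ℤ_[ℓ] (H ℓ k s)

/-- The standard generator `x̄_{t+1}` (Lean index `t : Fin (s-1)`). -/
def gen (ℓ k s : ℕ) (t : Fin (s - 1)) : H ℓ k s := Multiplicative.ofAdd (Pi.single t 1)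

/-- The product `x̄₁ x̄₂ ⋯ x̄_{s-1}`. -/
def allProd (ℓ k s : ℕ) : H ℓ k s := ∏ t : Fin (s - 1), gen ℓ k s t

/-- The elements `x̄₁, …, x̄_{s-1}` and `x̄_s = (x̄₁ x̄₂ ⋯ x̄_{s-1})⁻¹`
(Lean index `i : Fin s`, the mathematical `i+1`). -/
def xbar (ℓ k s : ℕ) (i : Fin s) : H ℓ k s :=
  if h : (i : ℕ) < s - 1 then gen ℓ k s ⟨i, h⟩ else (allProd ℓ k s)⁻¹

/-- The element `Σ_i = Σ_{ν=0}^{ℓᵏ-1} x̄_i^ν` of `ℤ_ℓ[H₀]`. -/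
noncomputable def Sig (ℓ k s : ℕ) [Fact (Nat.Prime ℓ)] (i : Fin s) : A ℓ k s :=
  ∑ ν ∈ Finset.range (ℓ ^ k), MonoidAlgebra.of ℤ_[ℓ] (H ℓ k s) (xbar ℓ k s i ^ ν)

/-- The product `x̄₁ x̄₂ ⋯ x̄_{j-1}` of the first `j` (Lean) generators
(Lean `j : Fin s` is the mathematical index `j+1`; for Lean `j = 0` this is `1`). -/
def prefixProd (ℓ k s : ℕ) (j : Fin s) : H ℓ k s :=
  ∏ t : Fin (s - 1), if (t : ℕ) < (j : ℕ) then gen ℓ k s t else 1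


/-- The subgroup `K_i ≤ H₀` generated by the `x̄_j`, `1 ≤ j ≤ s-1`, `j ≠ i`. -/
def Ksub (ℓ k s : ℕ) (i : Fin (s - 1)) : Subgroup (H ℓ k s) :=
  Subgroup.closure {g | ∃ j : Fin (s - 1), j ≠ i ∧ g = gen ℓ k s j}



open Finset MonoidAlgebra

section Abstract

variable {R : Type*} [CommRing R] {G : Type*} [CommGroup G] [DecidableEq G]
variable (q : ℕ) [NeZero q] (g : G) (π : G →* Multiplicative (ZMod q))

/-- power of `g` indexed by `ZMod q`. -/
noncomputable def gp (m : ZMod q) : G := g ^ m.val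

/-- `Σ = ∑_{m : ZMod q} g^m`. -/
noncomputable def Sg : MonoidAlgebra R G := ∑ m : ZMod q, of R G (gp q g m)

variable {q g}

lemma pow_mod (hgq : g ^ q = 1) (m : ℕ) : g ^ m = g ^ (m % q) := by
  conv_lhs => rw [← Nat.div_add_mod m q]
  rw [pow_add, pow_mul, hgq, one_pow, one_mul]

lemma gp_add (hgq : g ^ q = 1) (a b : ZMod q) : gp q g (a + b) = gp q g a * gp q g b := by
  rw [gp, gp, gp, ← pow_add, ZMod.val_add, ← pow_mod hgq]

lemma gp_zero : gp q g 0 = 1 := by simp [gp]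

lemma gp_neg (hgq : g ^ q = 1) (m : ZMod q) : gp q g (-m) = (gp q g m)⁻¹ := by
  rw [eq_inv_iff_mul_eq_one, ← gp_add hgq, neg_add_cancel, gp_zero]

lemma sum_range_eq_Sg (hgq : g ^ q = 1) :
    ∑ ν ∈ range q, of R G (g ^ ν) = Sg (R := R) q g := by
  rw [Sg]
  refine Finset.sum_nbij' (fun ν => (ν : ZMod q)) (fun m => m.val) ?_ ?_ ?_ ?_ ?_
  · intro a _; exact mem_univ _
  · intro b _; exact mem_range.mpr (ZMod.val_lt b)
  · intro a ha; exact ZMod.val_cast_of_lt (mem_range.mp ha)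
  · intro b _; exact ZMod.natCast_rightInverse b
  · intro a ha; rw [gp, ZMod.val_cast_of_lt (mem_range.mp ha)]

lemma Sg_inv (hgq : g ^ q = 1) : Sg (R := R) q g⁻¹ = Sg (R := R) q g := by
  have h1 : ∀ m : ZMod q, gp q g⁻¹ m = gp q g (-m) := by
    intro m; rw [gp, inv_pow, ← gp, gp_neg hgq]
  rw [Sg, Sg]
  exact Fintype.sum_equiv (Equiv.neg (ZMod q)) _ _ (fun m => by rw [h1, Equiv.neg_apply])

lemma Sg_mul_gp (hgq : g ^ q = 1) (m : ZMod q) :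
    Sg (R := R) q g * of R G (gp q g m) = Sg (R := R) q g := by
  rw [Sg, Finset.sum_mul]
  refine Fintype.sum_equiv (Equiv.addRight m) _ _ (fun ν => ?_)
  rw [Equiv.coe_addRight, ← map_mul, ← gp_add hgq]

end Abstract

set_option linter.unusedSectionVars false
set_option linter.unusedVariables false

section Abstract2
variable {R : Type*} [CommRing R] {G : Type*} [CommGroup G] [DecidableEq G]
variable (q : ℕ) [NeZero q] (g : G) (π : G →* Multiplicative (ZMod q))

/-- the `⟨g⟩`-coordinate of `x`. -/
def cK (x : G) : ZMod q := Multiplicative.toAdd (π x)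

/-- the coset representative of `x`. -/
noncomputable def rK (x : G) : G := (gp q g (cK q π x))⁻¹ * x

variable {q g π}

lemma x_eq_gp_mul_rK (x : G) : x = gp q g (cK q π x) * rK q g π x := by
  rw [rK, ← mul_assoc, mul_inv_cancel, one_mul]

lemma π_gp (hπ : π g = Multiplicative.ofAdd 1) (m : ZMod q) :
    π (gp q g m) = Multiplicative.ofAdd m := by
  rw [gp, map_pow, hπ, ← ofAdd_nsmul, nsmul_eq_mul, mul_one]
  exact congrArg _ (ZMod.natCast_rightInverse m)

lemma π_rK (hπ : π g = Multiplicative.ofAdd 1) (x : G) : π (rK q g π x) = 1 := by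
  rw [rK, map_mul, map_inv, π_gp hπ, cK]
  simp

lemma coeff_lemma (hgq : g ^ q = 1) (hπ : π g = Multiplicative.ofAdd 1)
    {h h' : G} (hh : π h = 1) (hh' : π h' = 1) (m : ZMod q) :
    (Sg (R := R) q g * of R G h').coeff (gp q g m * h) = if h' = h then 1 else 0 := by
  have key : ∀ ν : ZMod q, (gp q g ν * h' = gp q g m * h) ↔ (ν = m ∧ h' = h) := by
    intro ν
    constructor
    · intro he
      have hπe := congrArg π he
      rw [map_mul, map_mul, π_gp hπ, π_gp hπ, hh, hh', mul_one, mul_one] at hπe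
      have hνm : ν = m := by
        have := congrArg Multiplicative.toAdd hπe; simpa using this
      refine ⟨hνm, ?_⟩
      rw [hνm] at he
      exact mul_left_cancel he
    · rintro ⟨rfl, rfl⟩; rfl
  have expand : Sg (R := R) q g * of R G h' = ∑ ν : ZMod q, of R G (gp q g ν * h') := by
    rw [Sg, Finset.sum_mul]
    exact Finset.sum_congr rfl (fun ν _ => (map_mul (of R G) _ _).symm)
  rw [expand]
  rw [MonoidAlgebra.coeff_sum, Finsupp.finset_sum_apply]
  have : ∀ ν : ZMod q, (of R G (gp q g ν * h')).coeff (gp q g m * h)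
      = if ν = m ∧ h' = h then (1 : R) else 0 := by
    intro ν
    rw [MonoidAlgebra.of_apply, MonoidAlgebra.single_apply]
    simp only [key ν]
  rw [Finset.sum_congr rfl (fun ν _ => this ν)]
  by_cases hcase : h' = h
  · simp [hcase]
  · simp [hcase]

end Abstract2

section Abstract3
variable {R : Type*} [CommRing R] {G : Type*} [CommGroup G] [DecidableEq G]
variable (q : ℕ) [NeZero q] (g : G) (π : G →* Multiplicative (ZMod q))

/-- The candidate basis family, indexed by the kernel of `π`. -/
noncomputable def bfam : {h : G // π h = 1} → MonoidAlgebra R G :=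
  fun h => Sg (R := R) q g * of R G h.val

variable {q g π}

lemma bfam_li (hgq : g ^ q = 1) (hπ : π g = Multiplicative.ofAdd 1) :
    LinearIndependent R (bfam (R := R) q g π) := by
  rw [linearIndependent_iff']
  intro s f hsum h hmem
  have happ := congrArg (fun z : MonoidAlgebra R G => z.coeff h.val) hsum
  simp only [MonoidAlgebra.coeff_zero, Finsupp.coe_zero, Pi.zero_apply] at happ
  rw [MonoidAlgebra.coeff_sum, Finsupp.finset_sum_apply] at happ
  have hterm : ∀ i ∈ s, (f i • bfam (R := R) q g π i).coeff h.val = if i = h then f i else 0 := by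
    intro i _
    rw [MonoidAlgebra.coeff_smul, Finsupp.smul_apply, bfam]
    have : (h : G) = gp q g 0 * h.val := by rw [gp_zero, one_mul]
    rw [this, coeff_lemma hgq hπ h.prop i.prop 0]
    by_cases hi : i = h
    · simp [hi, Subtype.ext_iff.mp hi]
    · have : (i : G) ≠ h.val := fun he => hi (Subtype.ext he)
      simp [hi, this]
  rw [Finset.sum_congr rfl hterm, Finset.sum_ite_eq' s h (fun i => f i), if_pos hmem] at happ
  exact happ

lemma Sg_mul_of_eq_rK (hgq : g ^ q = 1) (x : G) :
    Sg (R := R) q g * of R G x = Sg (R := R) q g * of R G (rK q g π x) := by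
  have h2 : Sg (R := R) q g * of R G (gp q g (cK q π x) * rK q g π x)
      = Sg (R := R) q g * of R G (rK q g π x) := by
    rw [map_mul, ← mul_assoc, Sg_mul_gp hgq]
  rw [← h2, ← x_eq_gp_mul_rK]

lemma Sg_mul_mem_span (hgq : g ^ q = 1) (hπ : π g = Multiplicative.ofAdd 1)
    (a : MonoidAlgebra R G) :
    Sg (R := R) q g * a ∈ Submodule.span R (Set.range (bfam (R := R) q g π)) := by
  induction a using MonoidAlgebra.induction_linear with
  | zero => simp
  | add f g hf hg => rw [mul_add]; exact add_mem hf hg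
  | single x v =>
    have h1 : (MonoidAlgebra.single x v : MonoidAlgebra R G) = v • of R G x := by
      rw [MonoidAlgebra.of_apply, MonoidAlgebra.smul_single', mul_one]
    rw [h1, mul_smul_comm, Sg_mul_of_eq_rK (π := π) hgq]
    exact Submodule.smul_mem _ _ (Submodule.subset_span ⟨⟨rK q g π x, π_rK hπ x⟩, rfl⟩)

lemma ideal_restrict_eq (hgq : g ^ q = 1) (hπ : π g = Multiplicative.ofAdd 1) :
    (Ideal.span {Sg (R := R) q g}).restrictScalars R
      = Submodule.span R (Set.range (bfam (R := R) q g π)) := by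
  apply le_antisymm
  · intro z hz
    rw [Submodule.restrictScalars_mem, Ideal.mem_span_singleton'] at hz
    obtain ⟨a, rfl⟩ := hz
    rw [mul_comm]
    exact Sg_mul_mem_span hgq hπ a
  · rw [Submodule.span_le]
    rintro _ ⟨h, rfl⟩
    exact Ideal.mem_span_singleton'.mpr ⟨of R G h.val, mul_comm _ _⟩

noncomputable def basisK (hgq : g ^ q = 1) (hπ : π g = Multiplicative.ofAdd 1) :
    Module.Basis {h : G // π h = 1} R ((Ideal.span {Sg (R := R) q g}).restrictScalars R) :=
  (Module.Basis.span (bfam_li hgq hπ)).map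
    (LinearEquiv.ofEq _ _ (ideal_restrict_eq hgq hπ).symm)

end Abstract3

section Abstract4
variable {R : Type*} [CommRing R] {G : Type*} [CommGroup G] [DecidableEq G]
variable {q : ℕ} [NeZero q] {g : G} {π : G →* Multiplicative (ZMod q)}

lemma ideal_eq_set (hgq : g ^ q = 1) (hπ : π g = Multiplicative.ofAdd 1) :
    (Ideal.span {Sg (R := R) q g} : Set (MonoidAlgebra R G)) =
      {z | ∃ y ∈ Submodule.span R (of R G '' {x | π x = 1}), z = Sg (R := R) q g * y} := by
  ext z
  constructor
  · intro hz
    rw [SetLike.mem_coe, Ideal.mem_span_singleton'] at hz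
    obtain ⟨a, rfl⟩ := hz
    have main : ∀ a : MonoidAlgebra R G, ∃ y ∈ Submodule.span R (of R G '' {x | π x = 1}),
        Sg (R := R) q g * a = Sg (R := R) q g * y := by
      intro a
      induction a using MonoidAlgebra.induction_linear with
      | zero => exact ⟨0, Submodule.zero_mem _, rfl⟩
      | add f g hf hg =>
        obtain ⟨y1, hy1, he1⟩ := hf
        obtain ⟨y2, hy2, he2⟩ := hg
        exact ⟨y1 + y2, add_mem hy1 hy2, by rw [mul_add, mul_add, he1, he2]⟩
      | single x v =>
        refine ⟨v • of R G (rK q g π x), Submodule.smul_mem _ _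
          (Submodule.subset_span ⟨rK q g π x, π_rK hπ x, rfl⟩), ?_⟩
        have h1 : (MonoidAlgebra.single x v : MonoidAlgebra R G) = v • of R G x := by
          rw [MonoidAlgebra.of_apply, MonoidAlgebra.smul_single', mul_one]
        rw [h1, mul_smul_comm, mul_smul_comm, Sg_mul_of_eq_rK (π := π) hgq]
    obtain ⟨y, hy, he⟩ := main a
    rw [mul_comm] at he
    exact ⟨y, hy, he⟩
  · rintro ⟨y, hy, rfl⟩
    rw [SetLike.mem_coe]
    exact Ideal.mem_span_singleton'.mpr ⟨y, mul_comm _ _⟩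

lemma ideal_eq_fixed (hq1 : 1 < q) (hgq : g ^ q = 1) (hπ : π g = Multiplicative.ofAdd 1) :
    (Ideal.span {Sg (R := R) q g} : Set (MonoidAlgebra R G)) =
      {z | of R G g * z = z} := by
  have hg1 : gp q g 1 = g := by
    rw [gp]
    haveI : Fact (1 < q) := ⟨hq1⟩
    rw [ZMod.val_one q, pow_one]
  have hfix_sigma : of R G g * Sg (R := R) q g = Sg (R := R) q g := by
    have h2 := Sg_mul_gp (R := R) hgq (1 : ZMod q)
    rw [hg1] at h2
    rw [mul_comm]
    exact h2
  ext z
  constructor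
  · intro hz
    rw [SetLike.mem_coe, Ideal.mem_span_singleton'] at hz
    obtain ⟨a, rfl⟩ := hz
    show of R G g * (a * Sg (R := R) q g) = a * Sg (R := R) q g
    rw [mul_comm a, ← mul_assoc, hfix_sigma]
  · intro hz
    have hz' : ∀ x : G, z.coeff (g⁻¹ * x) = z.coeff x := by
      intro x
      have := congrArg (fun w : MonoidAlgebra R G => w.coeff x) hz
      simpa [MonoidAlgebra.of_apply, MonoidAlgebra.coeff_single_mul_apply] using this
    have hpow : ∀ (n : ℕ) (x : G), z.coeff (g ^ n * x) = z.coeff x := by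
      intro n
      induction n with
      | zero => simp
      | succ n ih =>
        intro x
        have h2 := hz' (g ^ (n + 1) * x)
        have h3 : g⁻¹ * (g ^ (n + 1) * x) = g ^ n * x := by
          rw [pow_succ, ← mul_assoc, ← mul_assoc]
          group
        rw [h3] at h2
        rw [← h2, ih]
    classical
    set S := z.coeff.support.filter (fun x => π x = 1) with hS
    set y : MonoidAlgebra R G := ∑ x' ∈ S, z.coeff x' • of R G x' with hy
    have hmain : Sg (R := R) q g * y = z := by
      have hexp : Sg (R := R) q g * y = ∑ x' ∈ S, z.coeff x' • (Sg (R := R) q g * of R G x') := by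
        rw [hy, Finset.mul_sum]
        exact Finset.sum_congr rfl (fun x' _ => (mul_smul_comm _ _ _))
      ext x
      have hxd := x_eq_gp_mul_rK (π := π) (g := g) x
      have hzx : z.coeff (rK q g π x) = z.coeff x := by
        conv_rhs => rw [hxd]
        rw [gp, hpow]
      rw [hexp, MonoidAlgebra.coeff_sum, Finsupp.finset_sum_apply]
      have hterm : ∀ x' ∈ S, (z.coeff x' • (Sg (R := R) q g * of R G x')).coeff x
          = if x' = rK q g π x then z.coeff x' else 0 := by
        intro x' hx'
        have hx'k : π x' = 1 := (Finset.mem_filter.mp hx').2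
        rw [MonoidAlgebra.coeff_smul, Finsupp.smul_apply]
        conv_lhs => rw [hxd]
        rw [coeff_lemma hgq hπ (π_rK hπ x) hx'k]
        by_cases hc : x' = rK q g π x
        · simp [hc]
        · simp [hc]
      rw [Finset.sum_congr rfl hterm, Finset.sum_ite_eq' S (rK q g π x) (fun x' => z.coeff x')]
      by_cases hcx : z.coeff x = 0
      · rw [if_neg, hcx]
        intro hmem
        have h4 := (Finset.mem_filter.mp hmem).1
        rw [Finsupp.mem_support_iff, hzx, hcx] at h4
        exact h4 rfl
      · rw [if_pos, hzx]
        refine Finset.mem_filter.mpr ⟨?_, π_rK hπ x⟩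
        rw [Finsupp.mem_support_iff, hzx]
        exact hcx
    rw [SetLike.mem_coe, ← hmain]
    exact Ideal.mem_span_singleton'.mpr ⟨y, mul_comm _ _⟩

end Abstract4


section Glue

variable (ℓ k s : ℕ) [Fact (Nat.Prime ℓ)]

/-- Evaluation at coordinate `i`, as a monoid hom. -/
def pii (i : Fin (s - 1)) : H ℓ k s →* Multiplicative (ZMod (ℓ ^ k)) :=
  AddMonoidHom.toMultiplicative (Pi.evalAddMonoidHom (fun _ => ZMod (ℓ ^ k)) i)

lemma pii_apply (i : Fin (s - 1)) (x : H ℓ k s) :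
    pii ℓ k s i x = Multiplicative.ofAdd (Multiplicative.toAdd x i) := rfl

lemma gen_pow (t : Fin (s - 1)) (n : ℕ) :
    gen ℓ k s t ^ n = Multiplicative.ofAdd (Pi.single t (n : ZMod (ℓ ^ k))) := by
  rw [gen, ← ofAdd_nsmul]
  congr 1
  rw [← Pi.single_smul, nsmul_eq_mul, mul_one]

lemma gen_pow_card (t : Fin (s - 1)) : gen ℓ k s t ^ (ℓ ^ k) = 1 := by
  rw [gen_pow, ZMod.natCast_self, Pi.single_zero]
  rfl

lemma pii_gen_self (i : Fin (s - 1)) :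
    pii ℓ k s i (gen ℓ k s i) = Multiplicative.ofAdd 1 := by
  rw [pii_apply, gen]
  simp

lemma pii_gen_ne {i j : Fin (s - 1)} (hj : j ≠ i) : pii ℓ k s i (gen ℓ k s j) = 1 := by
  rw [pii_apply, gen]
  simp [Pi.single_eq_of_ne (Ne.symm hj)]

lemma allProd_eq :
    allProd ℓ k s = Multiplicative.ofAdd (fun _ : Fin (s - 1) => (1 : ZMod (ℓ ^ k))) := by
  rw [allProd]
  refine Multiplicative.toAdd.injective ?_
  rw [toAdd_prod]
  simp only [gen, toAdd_ofAdd]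
  exact Finset.univ_sum_single _

lemma allProd_pow_card : allProd ℓ k s ^ (ℓ ^ k) = 1 := by
  rw [allProd_eq, ← ofAdd_nsmul]
  have h1 : (ℓ ^ k) • (fun _ : Fin (s - 1) => (1 : ZMod (ℓ ^ k))) = fun _ => 0 := by
    funext j
    simp [nsmul_eq_mul, ZMod.natCast_self]
  rw [h1]
  rfl

lemma pii_allProd (i : Fin (s - 1)) :
    pii ℓ k s i (allProd ℓ k s) = Multiplicative.ofAdd 1 := by
  rw [allProd_eq, pii_apply]
  simp

lemma Ksub_eq (i : Fin (s - 1)) :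
    (Ksub ℓ k s i : Set (H ℓ k s)) = {x | pii ℓ k s i x = 1} := by
  have hker : Ksub ℓ k s i = (pii ℓ k s i).ker := by
    apply le_antisymm
    · rw [Ksub, Subgroup.closure_le]
      rintro gx ⟨j, hj, rfl⟩
      exact MonoidHom.mem_ker.mpr (pii_gen_ne ℓ k s hj)
    · intro x hx
      have hf : Multiplicative.toAdd x i = 0 := by
        have h1 : Multiplicative.ofAdd (Multiplicative.toAdd x i) = 1 := by
          rw [← pii_apply]
          exact hx
        simpa using h1
      have hxeq : x = ∏ j : Fin (s - 1),
          (if h : j = i then 1 else gen ℓ k s j ^ (Multiplicative.toAdd x j).val) := by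
        refine Multiplicative.toAdd.injective ?_
        rw [toAdd_prod]
        have hterm : ∀ j : Fin (s - 1),
            Multiplicative.toAdd (if h : j = i then (1 : H ℓ k s)
              else gen ℓ k s j ^ (Multiplicative.toAdd x j).val)
            = Pi.single j (Multiplicative.toAdd x j) := by
          intro j
          by_cases h : j = i
          · subst h
            rw [dif_pos rfl, hf, Pi.single_zero]
            rfl
          · rw [dif_neg h, gen_pow]
            rw [toAdd_ofAdd, ZMod.natCast_rightInverse (Multiplicative.toAdd x j)]
        rw [Finset.sum_congr rfl (fun j _ => hterm j), Finset.univ_sum_single]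
      rw [hxeq]
      refine Subgroup.prod_mem _ (fun j _ => ?_)
      by_cases h : j = i
      · rw [dif_pos h]; exact one_mem _
      · rw [dif_neg h]
        have hmem : gen ℓ k s j ∈ {g | ∃ j' : Fin (s - 1), j' ≠ i ∧ g = gen ℓ k s j'} :=
          ⟨j, h, rfl⟩
        exact pow_mem (Subgroup.subset_closure hmem) _
  rw [hker]
  ext x
  simp [MonoidHom.mem_ker]

lemma Sig_castLE [NeZero (ℓ ^ k)] (i : Fin (s - 1)) :
    Sig ℓ k s (Fin.castLE (Nat.sub_le s 1) i) = Sg (R := ℤ_[ℓ]) (ℓ ^ k) (gen ℓ k s i) := by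
  have hx : xbar ℓ k s (Fin.castLE (Nat.sub_le s 1) i) = gen ℓ k s i := by
    rw [xbar]
    simp [i.isLt]
  rw [Sig, hx]
  exact sum_range_eq_Sg (gen_pow_card ℓ k s i)

lemma Sig_last [NeZero (ℓ ^ k)] (hs : 3 ≤ s) :
    Sig ℓ k s ⟨s - 1, by omega⟩ = Sg (R := ℤ_[ℓ]) (ℓ ^ k) (allProd ℓ k s) := by
  have hx : xbar ℓ k s ⟨s - 1, by omega⟩ = (allProd ℓ k s)⁻¹ := by
    rw [xbar, dif_neg]
    simp
  have hgq : (allProd ℓ k s)⁻¹ ^ (ℓ ^ k) = 1 := by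
    rw [inv_pow, allProd_pow_card, inv_one]
  rw [Sig, hx, sum_range_eq_Sg hgq, Sg_inv (allProd_pow_card ℓ k s)]

lemma card_ker [NeZero (ℓ ^ k)] (hs : 3 ≤ s) (i : Fin (s - 1)) :
    Fintype.card {h : H ℓ k s // pii ℓ k s i h = 1} = ℓ ^ (k * (s - 2)) := by
  have e0 : {h : H ℓ k s // pii ℓ k s i h = 1}
      ≃ {f : Fin (s - 1) → ZMod (ℓ ^ k) // f i = 0} := by
    refine Equiv.subtypeEquiv Multiplicative.toAdd (fun h => ?_)
    rw [pii_apply]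
    constructor
    · intro h1
      simpa using h1
    · intro h1
      show Multiplicative.ofAdd _ = 1
      rw [show Multiplicative.toAdd h i = 0 from h1]
      rfl
  have e1 : {f : Fin (s - 1) → ZMod (ℓ ^ k) // f i = 0}
      ≃ ({j : Fin (s - 1) // j ≠ i} → ZMod (ℓ ^ k)) :=
    { toFun := fun f j => f.1 j.1
      invFun := fun g => ⟨fun j => if h : j = i then 0 else g ⟨j, h⟩, by simp⟩
      left_inv := by
        rintro ⟨f, hf⟩
        ext j
        by_cases h : j = i
        · subst h; simp [hf]
        · simp [h]
      right_inv := by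
        intro g
        funext j
        simp [j.prop] }
  rw [Fintype.card_congr (e0.trans e1), Fintype.card_fun]
  have h1 : Fintype.card {j : Fin (s - 1) // j ≠ i} = s - 1 - 1 := by
    simp [Fintype.card_subtype_compl]
  rw [h1, ZMod.card, ← pow_mul]
  have h2 : s - 1 - 1 = s - 2 := by omega
  rw [h2]

end Glue


/-- for `1 ≤ i ≤ s-1` the ideal `Σ_i·ℤ_ℓ[H₀]` equals the set
`Σ_i·ℤ_ℓ[K_i]` (where `ℤ_ℓ[K_i] ⊆ ℤ_ℓ[H₀]` is the `ℤ_ℓ`-span of `K_i`), and it is a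
free `ℤ_ℓ`-module of rank `ℓ^{k(s-2)}`; moreover `Σ_s·ℤ_ℓ[H₀]` equals the set of
elements fixed under multiplication by `x̄₁⋯x̄_{s-1}`, and it is also a free
`ℤ_ℓ`-module of rank `ℓ^{k(s-2)}`. -/
theorem statement15 (ℓ k s : ℕ) [Fact (Nat.Prime ℓ)] (hk : 1 ≤ k) (hs : 3 ≤ s) :
    (∀ i : Fin (s - 1),
      (Ideal.span {Sig ℓ k s (Fin.castLE (Nat.sub_le s 1) i)} : Set (A ℓ k s)) =
        {z | ∃ y ∈ Submodule.span ℤ_[ℓ]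
            (⇑(MonoidAlgebra.of ℤ_[ℓ] (H ℓ k s)) '' (Ksub ℓ k s i : Set (H ℓ k s))),
          z = Sig ℓ k s (Fin.castLE (Nat.sub_le s 1) i) * y}) ∧
    (∀ i : Fin (s - 1),
      Nonempty (Module.Basis (Fin (ℓ ^ (k * (s - 2)))) ℤ_[ℓ]
        ↥(Submodule.restrictScalars ℤ_[ℓ]
          (Ideal.span {Sig ℓ k s (Fin.castLE (Nat.sub_le s 1) i)})))) ∧
    ((Ideal.span {Sig ℓ k s ⟨s - 1, by omega⟩} : Set (A ℓ k s)) =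
      {z | MonoidAlgebra.of ℤ_[ℓ] (H ℓ k s) (allProd ℓ k s) * z = z}) ∧
    Nonempty (Module.Basis (Fin (ℓ ^ (k * (s - 2)))) ℤ_[ℓ]
      ↥(Submodule.restrictScalars ℤ_[ℓ]
        (Ideal.span {Sig ℓ k s ⟨s - 1, by omega⟩}))) := by
  have hprime : Nat.Prime ℓ := Fact.out
  haveI : NeZero (ℓ ^ k) := ⟨pow_ne_zero _ hprime.ne_zero⟩
  have hq1 : 1 < ℓ ^ k := Nat.one_lt_pow (by omega) hprime.two_le
  have i0 : Fin (s - 1) := ⟨0, by omega⟩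
  refine ⟨?_, ?_, ?_, ?_⟩
  · intro i
    rw [Sig_castLE, Ksub_eq]
    exact ideal_eq_set (gen_pow_card ℓ k s i) (pii_gen_self ℓ k s i)
  · intro i
    rw [Sig_castLE]
    exact ⟨(basisK (gen_pow_card ℓ k s i) (pii_gen_self ℓ k s i)).reindex
      (Fintype.equivFinOfCardEq (card_ker ℓ k s hs i))⟩
  · rw [Sig_last ℓ k s hs]
    exact ideal_eq_fixed hq1 (allProd_pow_card ℓ k s) (pii_allProd ℓ k s ⟨0, by omega⟩)
  · rw [Sig_last ℓ k s hs]
    exact ⟨(basisK (allProd_pow_card ℓ k s) (pii_allProd ℓ k s ⟨0, by omega⟩)).reindex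
      (Fintype.equivFinOfCardEq (card_ker ℓ k s hs ⟨0, by omega⟩))⟩

end GenFermatGA
end

section
/- Suppose β ∈ ℤ_ℓ[H₀] is such that for every j with 1 ≤ j ≤ s there exists β_j ∈ ℤ_ℓ[H₀] with x̄₁x̄₂⋯x̄_{j−1}·β = Σ_j·β_j (the empty product being 1). Then β is fixed under multiplication by every element of H₀; equivalently, β ∈ ℤ_ℓ·N, where N = Σ_{h ∈ H₀} h is the norm element of ℤ_ℓ[H₀]. -/
namespace GenFermatGA

-- aux lemmas
lemma pow_card_eq_one (ℓ k s : ℕ) (g : H ℓ k s) : g ^ (ℓ ^ k) = 1 := by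
  have h : (ℓ ^ k) • (Multiplicative.toAdd g) = 0 := by
    funext t
    simp [Pi.smul_apply, nsmul_eq_mul, ZMod.natCast_self]
  have := congrArg Multiplicative.ofAdd h
  rw [ofAdd_nsmul] at this
  simp_all

lemma xbar_mul_Sig (ℓ k s : ℕ) [Fact (Nat.Prime ℓ)] (i : Fin s) :
    MonoidAlgebra.of ℤ_[ℓ] (H ℓ k s) (xbar ℓ k s i) * Sig ℓ k s i = Sig ℓ k s i := by
  classical
  set x := xbar ℓ k s i
  set n := ℓ ^ k
  set f : ℕ → A ℓ k s := fun m => MonoidAlgebra.of ℤ_[ℓ] (H ℓ k s) (x ^ m) with hf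
  have hx : x ^ n = 1 := pow_card_eq_one ℓ k s x
  have key : ∑ ν ∈ Finset.range n, f (ν + 1) = ∑ ν ∈ Finset.range n, f ν := by
    have h1 : ∑ ν ∈ Finset.range (n + 1), f ν
        = (∑ ν ∈ Finset.range n, f (ν + 1)) + f 0 := Finset.sum_range_succ' f n
    have h2 : ∑ ν ∈ Finset.range (n + 1), f ν
        = (∑ ν ∈ Finset.range n, f ν) + f n := Finset.sum_range_succ f n
    have hfn : f n = f 0 := by simp [hf, hx]
    have := h1.symm.trans h2
    rw [hfn] at this
    exact add_right_cancel this
  calc MonoidAlgebra.of ℤ_[ℓ] (H ℓ k s) x * Sig ℓ k s i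
      = ∑ ν ∈ Finset.range n, f (ν + 1) := by
        rw [Sig, Finset.mul_sum]
        refine Finset.sum_congr rfl fun ν _ => ?_
        rw [hf, ← map_mul, ← pow_succ']
    _ = Sig ℓ k s i := key

/-- if `β ∈ ℤ_ℓ[H₀]` is such that for every `1 ≤ j ≤ s` there is
`β_j` with `x̄₁⋯x̄_{j-1}·β = Σ_j·β_j`, then `β` is fixed under multiplication by every
element of `H₀`; equivalently `β ∈ ℤ_ℓ·N` with `N = Σ_{h ∈ H₀} h` the norm element. -/
theorem statement16 (ℓ k s : ℕ) [Fact (Nat.Prime ℓ)] (hk : 1 ≤ k) (hs : 3 ≤ s)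
    (β : A ℓ k s)
    (hβ : ∀ j : Fin s, ∃ βj : A ℓ k s,
      MonoidAlgebra.of ℤ_[ℓ] (H ℓ k s) (prefixProd ℓ k s j) * β = Sig ℓ k s j * βj) :
    (∀ h : H ℓ k s, MonoidAlgebra.of ℤ_[ℓ] (H ℓ k s) h * β = β) ∧
    ∃ c : ℤ_[ℓ], β = c • ∑ h : H ℓ k s, MonoidAlgebra.of ℤ_[ℓ] (H ℓ k s) h := by
  classical
  set of := MonoidAlgebra.of ℤ_[ℓ] (H ℓ k s) with hof
  -- Step A: β fixed by each xbar j
  have hxfix : ∀ j : Fin s, of (xbar ℓ k s j) * β = β := by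
    intro j
    obtain ⟨βj, hβj⟩ := hβ j
    have h1 : of (xbar ℓ k s j) * (of (prefixProd ℓ k s j) * β)
        = of (prefixProd ℓ k s j) * β := by
      rw [hβj, ← mul_assoc, xbar_mul_Sig]
    have h2 : of ((prefixProd ℓ k s j)⁻¹) * (of (prefixProd ℓ k s j) *
        (of (xbar ℓ k s j) * β))
        = of ((prefixProd ℓ k s j)⁻¹) * (of (prefixProd ℓ k s j) * β) := by
      rw [← mul_assoc (of (xbar ℓ k s j)), mul_comm (of (xbar ℓ k s j)) (of (prefixProd ℓ k s j)),
        mul_assoc] at h1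
      rw [h1]
    rw [← mul_assoc, ← mul_assoc, ← map_mul, inv_mul_cancel, map_one, one_mul] at h2
    rw [← mul_assoc, ← map_mul, inv_mul_cancel, map_one, one_mul] at h2
    exact h2
  -- Step B: β fixed by each generator
  have hgen : ∀ t : Fin (s - 1), of (gen ℓ k s t) * β = β := by
    intro t
    have ht : (t : ℕ) < s := lt_of_lt_of_le t.isLt (Nat.sub_le s 1)
    have := hxfix ⟨t, ht⟩
    rwa [xbar, dif_pos (by simpa using t.isLt)] at this
  -- submonoid of fixers
  have hone : of 1 * β = β := by rw [map_one, one_mul]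
  have hmul : ∀ a b : H ℓ k s, of a * β = β → of b * β = β → of (a * b) * β = β := by
    intro a b ha hb
    rw [map_mul, mul_assoc, hb, ha]
  let S : Submonoid (H ℓ k s) :=
    { carrier := {h | of h * β = β}
      one_mem' := hone
      mul_mem' := fun ha hb => hmul _ _ ha hb }
  have hall : ∀ h : H ℓ k s, of h * β = β := by
    intro h
    have hdecomp : h = ∏ t : Fin (s - 1), gen ℓ k s t ^ (Multiplicative.toAdd h t).val := by
      have hv : Multiplicative.toAdd h
          = ∑ t : Fin (s - 1), Pi.single t (Multiplicative.toAdd h t) :=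
        (Finset.univ_sum_single _).symm
      have : ∀ t : Fin (s - 1),
          gen ℓ k s t ^ (Multiplicative.toAdd h t).val
            = Multiplicative.ofAdd (Pi.single t (Multiplicative.toAdd h t)) := by
        intro t
        rw [gen, ← ofAdd_nsmul]
        congr 1
        rw [← Pi.single_smul]
        congr 1
        simp [nsmul_eq_mul, ZMod.natCast_val, ZMod.cast_id]
      rw [Finset.prod_congr rfl (fun t _ => this t), ← ofAdd_sum, ← hv]
      simp
    have hmem : h ∈ S := by
      rw [hdecomp]
      exact Submonoid.prod_mem S fun t _ => Submonoid.pow_mem S (hgen t) _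
    exact hmem
  refine ⟨hall, ⟨β.coeff 1, ?_⟩⟩
  -- constant coefficients
  have hconst : ∀ x : H ℓ k s, β.coeff x = β.coeff 1 := by
    intro x
    have := hall x
    have h2 : (of x * β).coeff x = β.coeff x := by rw [this]
    rw [hof, MonoidAlgebra.of_apply, MonoidAlgebra.coeff_single_mul_apply, inv_mul_cancel,
      one_mul] at h2
    exact h2.symm
  ext x
  rw [MonoidAlgebra.coeff_smul_apply]
  rw [hconst x]
  have : (∑ h : H ℓ k s, of h).coeff x = 1 := by
    rw [MonoidAlgebra.coeff_sum, Finset.sum_apply']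
    simp [hof, MonoidAlgebra.of_apply, MonoidAlgebra.coeff_single, Finsupp.single_apply]
  rw [this]
  simp

end GenFermatGA
end
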